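/- Let (Ω, ℱ, P) be a probability space, X : Ω → ℝ integrable and Y : Ω → ℝ measurable. If the law of ω ↦ (X ω, Y ω) on ℝ² equals the law of ω ↦ (−X ω, Y ω), then E[X | σ(Y)] = 0 almost surely. -/

import Mathlib

open MeasureTheory ProbabilityTheory Filter Set

noncomputable section

/-- Symmetry lemma: if the law of `(X, Y)` equals the law of `(-X, Y)`, then
`E[X | σ(Y)] = 0` almost surely. -/
theorem condexp_eq_zero_of_symmetric_law
    {Ω : Type*} [MeasurableSpace Ω] (P : Measure Ω) [IsProbabilityMeasure P]
    (X Y : Ω → ℝ) (hXm : Measurable X) (hYm : Measurable Y)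
    (hX : Integrable X P)
    (hsym : P.map (fun ω => (X ω, Y ω)) = P.map (fun ω => (-X ω, Y ω))) :
    P[X | MeasurableSpace.comap Y inferInstance] =ᵐ[P] 0 := by
  have hm : MeasurableSpace.comap Y inferInstance ≤ (inferInstance : MeasurableSpace Ω) :=
    hYm.comap_le
  have key : ∀ t : Set ℝ, MeasurableSet t → ∫ ω in Y ⁻¹' t, X ω ∂P = 0 := by
    intro t ht
    set g : ℝ × ℝ → ℝ := fun p => t.indicator (fun _ => (1:ℝ)) p.2 * p.1 with hg
    have hgm : Measurable g :=
      ((measurable_const.indicator ht).comp measurable_snd).mul measurable_fst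
    have h1 : ∫ ω in Y ⁻¹' t, X ω ∂P = ∫ p, g p ∂(P.map (fun ω => (X ω, Y ω))) := by
      rw [integral_map (hXm.prodMk hYm).aemeasurable hgm.aestronglyMeasurable]
      rw [← integral_indicator (hYm ht)]
      congr 1
      ext ω
      by_cases hω : Y ω ∈ t <;>
        simp [hg, Set.indicator_apply, Set.mem_preimage, hω]
    have h2 : ∫ p, g p ∂(P.map (fun ω => (-X ω, Y ω))) = - ∫ ω in Y ⁻¹' t, X ω ∂P := by
      rw [integral_map ((show Measurable (fun ω => -X ω) from hXm.neg).prodMk hYm).aemeasurable hgm.aestronglyMeasurable]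
      rw [← integral_neg, ← integral_indicator (hYm ht)]
      congr 1
      ext ω
      by_cases hω : Y ω ∈ t <;>
        simp [hg, Set.indicator_apply, Set.mem_preimage, hω]
    have := h1.trans (by rw [hsym, h2])
    linarith
  have h0 : (0 : Ω → ℝ) =ᵐ[P] P[X | MeasurableSpace.comap Y inferInstance] := by
    refine ae_eq_condExp_of_forall_setIntegral_eq hm hX ?_ ?_ ?_
    · intro s _ _; exact integrableOn_zero
    · rintro s ⟨t, ht, rfl⟩ _
      rw [key t ht]
      simp
    · exact stronglyMeasurable_const.aestronglyMeasurable
  exact h0.symm
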